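/- Let L = {1} ∪ {g ∈ F_2 : a_1 is a prefix of g} ∈ X_2 (the 'branch' of the Cayley tree of F_2 in the direction of the generator a_1). Then the closure of the orbit O(L) in (X_2, d_2) equals O(L) ∪ {F_2}, where F_2 ∈ X_2 denotes the vertex set of the full Cayley tree; moreover F_2 ∉ O(L), and {F_2} is a fixed point of the action (F_2 · g = F_2 for every g ∈ F_2). In particular the closure of O(L) consists of exactly two orbits. -/

import Mathlib

open Filter
open scoped ENNReal

noncomputable section

namespace GraphTrees

/-- The word length of an element of a free group: the length of its reduced word. -/
def wlen {n : ℕ} (g : FreeGroup (Fin n)) : ℕ := (FreeGroup.toWord g).length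

/-- `h` is a prefix of `g`. -/
def IsPref {n : ℕ} (h g : FreeGroup (Fin n)) : Prop :=
  wlen h + wlen (h⁻¹ * g) = wlen g

/-- Vertex sets of infinite connected subtrees of the Cayley graph of the free group on
`n` generators which contain the identity: subsets containing `1`, infinite, and
prefix-closed. -/
def IsTree {n : ℕ} (S : Set (FreeGroup (Fin n))) : Prop :=
  1 ∈ S ∧ S.Infinite ∧ ∀ g ∈ S, ∀ h : FreeGroup (Fin n), IsPref h g → h ∈ S

/-- The space `X n` of pointed trees. -/
def X (n : ℕ) : Type := {S : Set (FreeGroup (Fin n)) // IsTree S}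

variable {n : ℕ}

/-- The pattern `B_S(m)` of radius `m` of a pointed tree. -/
def ball (S : X n) (m : ℕ) : Set (FreeGroup (Fin n)) := {g ∈ S.1 | wlen g ≤ m}

/-- The set of radii on which two pointed trees have the same pattern. -/
def agreeSet (S S' : X n) : Set ℕ := {m | ball S m = ball S' m}

/-- The ball metric on the space of pointed trees. -/
def tdist (S S' : X n) : ℝ :=
  letI := Classical.propDecidable (S = S')
  if S = S' then 0 else Real.exp (-((sSup (agreeSet S S') : ℕ) : ℝ))

theorem tdist_eq_of_ne {x y : X n} (h : x ≠ y) :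
    tdist x y = Real.exp (-((sSup (agreeSet x y) : ℕ) : ℝ)) := by
  unfold tdist
  rw [if_neg h]

theorem ball_mono_eq {x y : X n} {k m : ℕ} (hkm : k ≤ m)
    (h : ball x m = ball y m) : ball x k = ball y k := by
  ext g
  constructor
  · rintro ⟨hg, hlen⟩
    have hx : g ∈ ball x m := ⟨hg, hlen.trans hkm⟩
    rw [h] at hx
    exact ⟨hx.1, hlen⟩
  · rintro ⟨hg, hlen⟩
    have hy : g ∈ ball y m := ⟨hg, hlen.trans hkm⟩
    rw [← h] at hy
    exact ⟨hy.1, hlen⟩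

theorem eq_of_agree_all {x y : X n} (h : ∀ m, ball x m = ball y m) : x = y := by
  apply Subtype.ext
  ext g
  constructor
  · intro hg
    have hx : g ∈ ball x (wlen g) := ⟨hg, le_rfl⟩
    rw [h] at hx
    exact hx.1
  · intro hg
    have hy : g ∈ ball y (wlen g) := ⟨hg, le_rfl⟩
    rw [← h] at hy
    exact hy.1

theorem bddAbove_agreeSet {x y : X n} (h : x ≠ y) : BddAbove (agreeSet x y) := by
  by_contra hb
  refine h (eq_of_agree_all fun m => ?_)
  rcases not_bddAbove_iff.mp hb m with ⟨k, hk, hmk⟩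
  exact ball_mono_eq hmk.le hk

theorem ball_zero (x : X n) : ball x 0 = {1} := by
  ext g
  simp only [ball, Set.mem_setOf_eq, Nat.le_zero, Set.mem_singleton_iff]
  constructor
  · rintro ⟨hg, hlen⟩
    exact FreeGroup.toWord_eq_nil_iff.mp (List.length_eq_zero_iff.mp hlen)
  · rintro rfl
    exact ⟨x.2.1, by simp [wlen]⟩

theorem zero_mem_agreeSet (x y : X n) : (0 : ℕ) ∈ agreeSet x y := by
  show ball x 0 = ball y 0
  rw [ball_zero, ball_zero]

theorem tdist_nonneg (x y : X n) : 0 ≤ tdist x y := by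
  rcases eq_or_ne x y with rfl | h
  · unfold tdist
    rw [if_pos rfl]
  · rw [tdist_eq_of_ne h]
    exact (Real.exp_pos _).le

theorem tdist_self (x : X n) : tdist x x = 0 := by
  unfold tdist
  rw [if_pos rfl]

theorem tdist_comm (x y : X n) : tdist x y = tdist y x := by
  by_cases h : x = y
  · subst h; rfl
  · have hs : agreeSet x y = agreeSet y x := by
      ext m
      exact eq_comm
    rw [tdist_eq_of_ne h, tdist_eq_of_ne (Ne.symm h), hs]

theorem tdist_ultra (x y z : X n) : tdist x z ≤ max (tdist x y) (tdist y z) := by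
  rcases eq_or_ne x z with rfl | hxz
  · exact le_max_of_le_left (by rw [tdist_self]; exact tdist_nonneg x y)
  rcases eq_or_ne x y with rfl | hxy
  · exact le_max_of_le_right le_rfl
  rcases eq_or_ne y z with rfl | hyz
  · exact le_max_of_le_left le_rfl
  have hbxy := bddAbove_agreeSet hxy
  have hbyz := bddAbove_agreeSet hyz
  have hbxz := bddAbove_agreeSet hxz
  have hma : sSup (agreeSet x y) ∈ agreeSet x y :=
    Nat.sSup_mem ⟨0, zero_mem_agreeSet x y⟩ hbxy
  have hmb : sSup (agreeSet y z) ∈ agreeSet y z :=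
    Nat.sSup_mem ⟨0, zero_mem_agreeSet y z⟩ hbyz
  have hmin : min (sSup (agreeSet x y)) (sSup (agreeSet y z)) ∈ agreeSet x z := by
    have h1 : ball x (min (sSup (agreeSet x y)) (sSup (agreeSet y z)))
        = ball y (min (sSup (agreeSet x y)) (sSup (agreeSet y z))) :=
      ball_mono_eq (min_le_left _ _) hma
    have h2 : ball y (min (sSup (agreeSet x y)) (sSup (agreeSet y z)))
        = ball z (min (sSup (agreeSet x y)) (sSup (agreeSet y z))) :=
      ball_mono_eq (min_le_right _ _) hmb
    exact h1.trans h2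
  have hle : min (sSup (agreeSet x y)) (sSup (agreeSet y z)) ≤ sSup (agreeSet x z) :=
    le_csSup hbxz hmin
  rw [tdist_eq_of_ne hxz, tdist_eq_of_ne hxy, tdist_eq_of_ne hyz]
  rcases le_total (sSup (agreeSet x y)) (sSup (agreeSet y z)) with hab | hab
  · refine le_max_of_le_left (Real.exp_le_exp.mpr ?_)
    have h2 : ((sSup (agreeSet x y) : ℕ) : ℝ) ≤ ((sSup (agreeSet x z) : ℕ) : ℝ) := by
      exact_mod_cast (min_eq_left hab) ▸ hle
    linarith
  · refine le_max_of_le_right (Real.exp_le_exp.mpr ?_)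
    have h2 : ((sSup (agreeSet y z) : ℕ) : ℝ) ≤ ((sSup (agreeSet x z) : ℕ) : ℝ) := by
      exact_mod_cast (min_eq_right hab) ▸ hle
    linarith

theorem tdist_triangle (x y z : X n) : tdist x z ≤ tdist x y + tdist y z :=
  (tdist_ultra x y z).trans
    (max_le (le_add_of_nonneg_right (tdist_nonneg y z))
      (le_add_of_nonneg_left (tdist_nonneg x y)))

instance : MetricSpace (X n) where
  dist := tdist
  dist_self := tdist_self
  dist_comm := tdist_comm
  dist_triangle := tdist_triangle
  eq_of_dist_eq_zero := by
    intro x y h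
    by_contra hne
    have h' : tdist x y = 0 := h
    rw [tdist_eq_of_ne hne] at h'
    exact (Real.exp_pos _).ne' h'

theorem dist_eq_tdist (x y : X n) : dist x y = tdist x y := rfl

/-- The translate `S · g` of a tree `S` by a vertex `g ∈ S`. -/
def translate {n : ℕ} (S : Set (FreeGroup (Fin n))) (g : FreeGroup (Fin n)) :
    Set (FreeGroup (Fin n)) := (fun h => g⁻¹ * h) '' S

/-- The orbit `O(S) = {S · g : g ∈ S}` of a pointed tree under the pseudogroup action. -/
def orbit (S : X n) : Set (X n) := {S' | ∃ g ∈ S.1, S'.1 = translate S.1 g}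

/-- A subset `Y ⊆ X n` is invariant under the pseudogroup action. -/
def Invariant (Y : Set (X n)) : Prop :=
  ∀ S ∈ Y, ∀ g ∈ S.1, ∀ S' : X n, S'.1 = translate S.1 g → S' ∈ Y

/-- `Λ(Z, m)`: the number of distinct patterns of radius `m` of trees in `Z`. -/
def Lam (Z : Set (X n)) (m : ℕ) : ℕ := ((fun S => ball S m) '' Z).ncard

/-- The lower box dimension of a subset of the space of pointed trees. -/
def lowerBox (Z : Set (X n)) : ℝ≥0∞ :=
  Filter.liminf (fun m : ℕ => ENNReal.ofReal (Real.log (Lam Z m)) / (m : ℝ≥0∞)) Filter.atTop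

/-- The upper box dimension of a subset of the space of pointed trees. -/
def upperBox (Z : Set (X n)) : ℝ≥0∞ :=
  Filter.limsup (fun m : ℕ => ENNReal.ofReal (Real.log (Lam Z m)) / (m : ℝ≥0∞)) Filter.atTop


/-- The branch of the Cayley tree of `F_2` in the direction of the first generator. -/
def branchL : Set (FreeGroup (Fin 2)) :=
  {1} ∪ {g | IsPref (FreeGroup.of (0 : Fin 2)) g}

open FreeGroup

lemma wlen_eq_norm {n : ℕ} (g : FreeGroup (Fin n)) : wlen g = norm g := rfl

lemma wlen_inv {n : ℕ} (g : FreeGroup (Fin n)) : wlen g⁻¹ = wlen g := by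
  simp [wlen_eq_norm]

lemma mul_eq_mk_cons {n : ℕ} (ℓ : Fin n × Bool) (z : FreeGroup (Fin n)) :
    mk [ℓ] * z = mk (ℓ :: z.toWord) := by
  conv_lhs => rw [← mk_toWord (x := z)]
  rw [mul_mk, List.singleton_append]

lemma toWord_mul_cancel {n : ℕ} (ℓ : Fin n × Bool) (z : FreeGroup (Fin n)) {t}
    (h : z.toWord = (ℓ.1, !ℓ.2) :: t) : (mk [ℓ] * z).toWord = t := by
  rw [mul_eq_mk_cons, toWord_mk, reduce.cons]
  rw [show reduce z.toWord = (ℓ.1, !ℓ.2) :: t from (reduce_toWord z).trans h]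
  simp

lemma toWord_mul_of_ne {n : ℕ} (ℓ : Fin n × Bool) (z : FreeGroup (Fin n))
    (h : z.toWord.head? ≠ some (ℓ.1, !ℓ.2)) : (mk [ℓ] * z).toWord = ℓ :: z.toWord := by
  rw [mul_eq_mk_cons, toWord_mk, reduce.cons]
  cases hw : z.toWord with
  | nil => simp
  | cons hd tl =>
    rw [show reduce (hd :: tl) = hd :: tl by rw [← hw]; exact reduce_toWord z]
    rw [hw] at h
    have hcond : ¬(ℓ.1 = hd.1 ∧ ℓ.2 = !hd.2) := by
      rintro ⟨h1, h2⟩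
      apply h
      have : hd = (ℓ.1, !ℓ.2) := by
        obtain ⟨x, b⟩ := hd; obtain ⟨y, c⟩ := ℓ
        simp_all
      simp [this]
    simp [hcond]

lemma step_cases {n : ℕ} (ℓ : Fin n × Bool) (z : FreeGroup (Fin n)) :
    (mk [ℓ] * z).toWord = ℓ :: z.toWord ∨
      ∃ t, z.toWord = (ℓ.1, !ℓ.2) :: t ∧ (mk [ℓ] * z).toWord = t := by
  by_cases h : z.toWord.head? = some (ℓ.1, !ℓ.2)
  · right
    cases hw : z.toWord with
    | nil => rw [hw] at h; simp at h
    | cons hd tl =>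
      rw [hw] at h
      simp only [List.head?_cons, Option.some.injEq] at h
      subst h
      exact ⟨tl, rfl, toWord_mul_cancel ℓ z hw⟩
  · left; exact toWord_mul_of_ne ℓ z h

lemma wlen_mk_mul_le {n : ℕ} (v : List (Fin n × Bool)) (z : FreeGroup (Fin n)) :
    wlen (mk v * z) ≤ v.length + wlen z := by
  calc wlen (mk v * z) ≤ wlen (mk v) + wlen z := by
        simpa [wlen_eq_norm] using norm_mul_le (mk v) z
    _ ≤ v.length + wlen z := by
        have : wlen (mk v) ≤ v.length := norm_mk_le
        omega

lemma wlen_le_mk_mul {n : ℕ} (v : List (Fin n × Bool)) (z : FreeGroup (Fin n)) :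
    wlen z ≤ v.length + wlen (mk v * z) := by
  have h1 : z = (mk v)⁻¹ * (mk v * z) := by group
  calc wlen z = wlen ((mk v)⁻¹ * (mk v * z)) := by rw [← h1]
    _ ≤ wlen (mk v)⁻¹ + wlen (mk v * z) := by
        simpa [wlen_eq_norm] using norm_mul_le (mk v)⁻¹ (mk v * z)
    _ ≤ v.length + wlen (mk v * z) := by
        have : wlen (mk v)⁻¹ ≤ v.length := by
          rw [wlen_inv]; exact norm_mk_le
        omega

lemma noCancel {n : ℕ} : ∀ (v : List (Fin n × Bool)) (z : FreeGroup (Fin n)),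
    wlen (mk v * z) = v.length + wlen z → (mk v * z).toWord = v ++ z.toWord := by
  intro v
  induction v with
  | nil => intro z h; rw [← one_eq_mk, one_mul, List.nil_append]
  | cons ℓ v' ih =>
    intro z h
    have hsplit : mk (ℓ :: v') * z = mk [ℓ] * (mk v' * z) := by
      rw [← mul_assoc, mul_mk, List.singleton_append]
    rcases step_cases ℓ (mk v' * z) with hc | ⟨t, ht, hc⟩
    · have h1 : wlen (mk (ℓ :: v') * z) = wlen (mk v' * z) + 1 := by
        rw [hsplit]; unfold wlen; rw [hc]; simp
      have h2 : wlen (mk v' * z) = v'.length + wlen z := by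
        simp only [List.length_cons] at h; omega
      rw [hsplit, hc, ih z h2, List.cons_append]
    · exfalso
      have hle : wlen (mk v' * z) ≤ v'.length + wlen z := wlen_mk_mul_le v' z
      have h1 : wlen (mk v' * z) = t.length + 1 := by unfold wlen; rw [ht]; simp
      have h2 : wlen (mk (ℓ :: v') * z) = t.length := by rw [hsplit]; unfold wlen; rw [hc]
      simp only [List.length_cons] at h
      omega

lemma isPref_toWord {n : ℕ} {h g : FreeGroup (Fin n)} (hp : IsPref h g) :
    g.toWord = h.toWord ++ (h⁻¹ * g).toWord := by
  have hmk : mk h.toWord * (h⁻¹ * g) = g := by rw [mk_toWord]; group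
  have := noCancel h.toWord (h⁻¹ * g) (by rw [hmk]; exact hp.symm)
  rwa [hmk] at this


open FreeGroup

lemma of_eq_mk {n : ℕ} (x : Fin n) : (of x : FreeGroup (Fin n)) = mk [(x, true)] := by
  rw [← mk_toWord (x := of x), toWord_of]

lemma isPref_of_iff {n : ℕ} (x₀ : Fin n) (g : FreeGroup (Fin n)) :
    IsPref (of x₀ : FreeGroup (Fin n)) g ↔ g.toWord.head? = some (x₀, true) := by
  have hinv : (of x₀ : FreeGroup (Fin n))⁻¹ = mk [(x₀, false)] := by
    rw [of_eq_mk, inv_mk]; rfl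
  have hlen1 : wlen (of x₀ : FreeGroup (Fin n)) = 1 := by
    unfold wlen; rw [toWord_of]; rfl
  unfold IsPref
  rw [hlen1, hinv]
  by_cases hh : g.toWord.head? = some (x₀, true)
  · cases hw : g.toWord with
    | nil => rw [hw] at hh; simp at hh
    | cons hd tl =>
      rw [hw] at hh
      simp only [List.head?_cons, Option.some.injEq] at hh
      subst hh
      have hc : (mk [((x₀ : Fin n), false)] * g).toWord = tl :=
        toWord_mul_cancel ((x₀ : Fin n), false) g (by rw [hw]; rfl)
      refine iff_of_true ?_ (by simp)
      unfold wlen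
      rw [hc, hw]
      simp [Nat.add_comm]
  · have hc : (mk [((x₀ : Fin n), false)] * g).toWord = ((x₀ : Fin n), false) :: g.toWord :=
      toWord_mul_of_ne _ g (by simpa using hh)
    constructor
    · intro hcontra
      exfalso
      unfold wlen at hcontra
      rw [hc] at hcontra
      simp at hcontra
      omega
    · intro h; exact absurd h hh

lemma mem_branchL_iff {g : FreeGroup (Fin 2)} :
    g ∈ branchL ↔ g.toWord = [] ∨ g.toWord.head? = some ((0 : Fin 2), true) := by
  unfold branchL
  rw [Set.mem_union, Set.mem_singleton_iff, Set.mem_setOf_eq, isPref_of_iff,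
    ← toWord_eq_nil_iff]

lemma pow_mem_branchL (k : ℕ) : (of (0 : Fin 2)) ^ k ∈ branchL := by
  rw [mem_branchL_iff, toWord_of_pow]
  cases k with
  | zero => left; rfl
  | succ k => right; simp [List.replicate_succ]

lemma one_mem_branchL : (1 : FreeGroup (Fin 2)) ∈ branchL := by
  simpa using pow_mem_branchL 0

lemma pow_mul_toWord (j : ℕ) (h : FreeGroup (Fin 2))
    (hh : h.toWord.head? ≠ some ((0 : Fin 2), false)) :
    ((of 0 : FreeGroup (Fin 2)) ^ j * h).toWord =
      List.replicate j ((0 : Fin 2), true) ++ h.toWord := by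
  induction j with
  | zero => simp
  | succ j ih =>
    have hsplit : (of 0 : FreeGroup (Fin 2)) ^ (j + 1) * h = mk [((0 : Fin 2), true)] * ((of 0) ^ j * h) := by
      rw [← of_eq_mk, ← mul_assoc, ← pow_succ']
    rw [hsplit]
    have hhead : ((of 0 : FreeGroup (Fin 2)) ^ j * h).toWord.head? ≠ some ((0 : Fin 2), false) := by
      rw [ih]
      cases j with
      | zero => simpa using hh
      | succ j => simp [List.replicate_succ]
    rw [toWord_mul_of_ne _ _ (by simpa using hhead), ih, List.replicate_succ]
    rfl

lemma translate_pref : ∀ (k : ℕ) (x h : FreeGroup (Fin 2)) (u : List (Fin 2 × Bool)),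
    x.toWord = h.toWord ++ u → (of 0 : FreeGroup (Fin 2)) ^ k * x ∈ branchL →
    (of 0 : FreeGroup (Fin 2)) ^ k * h ∈ branchL := by
  intro k
  induction k with
  | zero =>
    intro x h u hxu hx
    rw [pow_zero, one_mul] at hx ⊢
    rw [mem_branchL_iff] at hx ⊢
    cases hw : h.toWord with
    | nil => left; rfl
    | cons c t =>
      right
      rw [hw, List.cons_append] at hxu
      rcases hx with hx | hx
      · rw [hxu] at hx; simp at hx
      · rw [hxu] at hx; simpa using hx
  | succ k ih =>
    intro x h u hxu hx
    cases hw : h.toWord with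
    | nil =>
      have : h = 1 := toWord_eq_nil_iff.mp hw
      rw [this, mul_one]
      exact pow_mem_branchL (k + 1)
    | cons c t =>
      have hxw : x.toWord = c :: (t ++ u) := by rw [hxu, hw, List.cons_append]
      have hsplit : ∀ z : FreeGroup (Fin 2), (of 0 : FreeGroup (Fin 2)) ^ (k + 1) * z
          = (of 0) ^ k * (mk [((0 : Fin 2), true)] * z) := by
        intro z
        rw [← of_eq_mk, ← mul_assoc, ← pow_succ]
      by_cases hc : c = ((0 : Fin 2), false)
      · subst hc
        have h1 : (mk [((0 : Fin 2), true)] * h).toWord = t := toWord_mul_cancel _ h (by rw [hw]; rfl)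
        have h2 : (mk [((0 : Fin 2), true)] * x).toWord = t ++ u := toWord_mul_cancel _ x (by rw [hxw]; rfl)
        rw [hsplit]
        rw [hsplit] at hx
        exact ih _ _ u (by rw [h2, h1]) hx
      · have h1 : (mk [((0 : Fin 2), true)] * h).toWord = ((0 : Fin 2), true) :: h.toWord :=
          toWord_mul_of_ne _ h (by rw [hw]; simpa using hc)
        have h2 : (mk [((0 : Fin 2), true)] * x).toWord = ((0 : Fin 2), true) :: x.toWord :=
          toWord_mul_of_ne _ x (by rw [hxw]; simpa using hc)
        rw [hsplit]
        rw [hsplit] at hx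
        exact ih _ _ u (by rw [h2, h1, hxu, List.cons_append]) hx

open FreeGroup

lemma pow_mul_mem : ∀ (k : ℕ) (h : FreeGroup (Fin 2)), wlen h ≤ k →
    (of 0 : FreeGroup (Fin 2)) ^ k * h ∈ branchL := by
  intro k
  induction k with
  | zero =>
    intro h hlen
    have : h = 1 := by
      unfold wlen at hlen
      rw [← toWord_eq_nil_iff, ← List.length_eq_zero_iff]
      omega
    rw [this, pow_zero, one_mul]
    exact one_mem_branchL
  | succ k ih =>
    intro h hlen
    cases hw : h.toWord with
    | nil =>
      rw [toWord_eq_nil_iff.mp hw, mul_one]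
      exact pow_mem_branchL (k + 1)
    | cons c t =>
      by_cases hc : c = ((0 : Fin 2), false)
      · subst hc
        have hsplit : (of 0 : FreeGroup (Fin 2)) ^ (k + 1) * h
            = (of 0) ^ k * (mk [((0 : Fin 2), true)] * h) := by
          rw [← of_eq_mk, ← mul_assoc, ← pow_succ]
        have h1 : (mk [((0 : Fin 2), true)] * h).toWord = t := toWord_mul_cancel _ h (by rw [hw]; rfl)
        rw [hsplit]
        apply ih
        have : wlen h = t.length + 1 := by unfold wlen; rw [hw]; rfl
        unfold wlen
        rw [h1]
        omega
      · rw [mem_branchL_iff,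
          pow_mul_toWord (k + 1) h (by rw [hw]; simpa using hc)]
        right
        simp [List.replicate_succ]

lemma mul_getLast : ∀ (u : List (Fin 2 × Bool)) (y : FreeGroup (Fin 2)), u.length ≤ wlen y →
    mk u * y = 1 ∨ (mk u * y).toWord.getLast? = y.toWord.getLast? := by
  intro u
  induction u with
  | nil => intro y _; right; rw [← one_eq_mk, one_mul]
  | cons ℓ u' ih =>
    intro y hlen
    simp only [List.length_cons] at hlen
    have hz : mk u' * y ≠ 1 := by
      intro h0
      have h1 : mk u' = y⁻¹ := eq_inv_of_mul_eq_one_left h0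
      have h2 : wlen (mk u') ≤ u'.length := norm_mk_le
      rw [h1, wlen_inv] at h2
      omega
    rcases ih y (by omega) with h0 | hlast
    · exact absurd h0 hz
    have hz1 : (mk u' * y).toWord ≠ [] := fun hn => hz (toWord_eq_nil_iff.mp hn)
    have hsplit : mk (ℓ :: u') * y = mk [ℓ] * (mk u' * y) := by
      rw [← mul_assoc, mul_mk, List.singleton_append]
    rcases step_cases ℓ (mk u' * y) with hc | ⟨t, ht, hc⟩
    · right
      rw [hsplit, hc]
      cases hw : (mk u' * y).toWord with
      | nil => exact absurd hw hz1
      | cons d t' =>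
        rw [List.getLast?_cons_cons, ← hw]
        exact hlast
    · cases t with
      | nil =>
        left
        rw [hsplit, ← toWord_eq_nil_iff, hc]
      | cons d t' =>
        right
        rw [hsplit, hc, ← hlast, ht, List.getLast?_cons_cons]

open FreeGroup

lemma getLast_toWord_inv (z : FreeGroup (Fin 2)) :
    (z⁻¹).toWord.getLast? = z.toWord.head?.map (fun p => (p.1, !p.2)) := by
  rw [toWord_inv]
  unfold invRev
  rw [List.getLast?_reverse, List.head?_map]

lemma mem_branchL_mul {g h : FreeGroup (Fin 2)} (hg : g ∈ branchL)
    (hlen : wlen h ≤ wlen g) : g * h ∈ branchL := by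
  by_cases hg1 : g = 1
  · subst hg1
    have : h = 1 := by
      unfold wlen at hlen
      simp only [toWord_one, List.length_nil, Nat.le_zero, List.length_eq_zero_iff,
        toWord_eq_nil_iff] at hlen
      exact hlen
    rw [this, mul_one]
    exact one_mem_branchL
  · have hhead : g.toWord.head? = some ((0 : Fin 2), true) := by
      rcases mem_branchL_iff.mp hg with h0 | h0
      · exact absurd (toWord_eq_nil_iff.mp h0) hg1
      · exact h0
    have hkey := mul_getLast (h⁻¹).toWord g⁻¹
      (by rw [wlen_inv g]; unfold wlen at hlen ⊢; rwa [toWord_inv, invRev_length])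
    rw [mk_toWord, ← mul_inv_rev] at hkey
    rcases hkey with h0 | hlast
    · rw [inv_eq_one.mp h0]
      exact one_mem_branchL
    · rw [getLast_toWord_inv, getLast_toWord_inv, hhead] at hlast
      rw [mem_branchL_iff]
      right
      cases hgh : (g * h).toWord with
      | nil => rw [hgh] at hlast; simp at hlast
      | cons c t =>
        rw [hgh] at hlast
        simp only [List.head?_cons, Option.map_some] at hlast
        obtain ⟨x, b⟩ := c
        simp only [Option.some.injEq, Prod.mk.injEq] at hlast
        obtain ⟨hx, hb⟩ := hlast
        simp only [List.head?_cons, Option.some.injEq, Prod.mk.injEq]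
        constructor
        · exact hx
        · cases b
          · simp at hb
          · rfl

open FreeGroup

lemma isTree_branchL : IsTree branchL := by
  refine ⟨one_mem_branchL, ?_, ?_⟩
  · exact Set.infinite_of_injective_forall_mem
      (f := fun k : ℕ => (of 0 : FreeGroup (Fin 2)) ^ (k + 1))
      (fun k k' hkk => by
        have := congrArg FreeGroup.norm hkk
        simp only [FreeGroup.norm_of_pow] at this
        omega)
      (fun k => pow_mem_branchL (k + 1))
  · intro g hg h hp
    cases hw : h.toWord with
    | nil => rw [toWord_eq_nil_iff.mp hw]; exact one_mem_branchL
    | cons c t =>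
      have hword := isPref_toWord hp
      rw [mem_branchL_iff]
      right
      rcases mem_branchL_iff.mp hg with h0 | h0
      · rw [hword, hw] at h0; simp at h0
      · rw [hword, hw, List.cons_append] at h0
        rw [hw]
        simpa using h0

lemma isTree_univ : IsTree (Set.univ : Set (FreeGroup (Fin 2))) :=
  ⟨trivial,
   Set.infinite_of_injective_forall_mem
    (f := fun k : ℕ => (of 0 : FreeGroup (Fin 2)) ^ k)
    (fun k k' hkk => by
      have := congrArg FreeGroup.norm hkk
      simpa using this)
    (fun _ => trivial),
   fun _ _ _ _ => trivial⟩

lemma mem_translate_iff {n : ℕ} {S : Set (FreeGroup (Fin n))} {g x : FreeGroup (Fin n)} :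
    x ∈ translate S g ↔ g * x ∈ S := by
  constructor
  · rintro ⟨s, hs, rfl⟩
    simpa [mul_inv_cancel_left] using hs
  · intro hx
    exact ⟨g * x, hx, by simp [inv_mul_cancel_left]⟩

lemma isTree_translate_pow (k : ℕ) :
    IsTree (translate branchL ((of 0 : FreeGroup (Fin 2)) ^ k)) := by
  refine ⟨?_, ?_, ?_⟩
  · exact mem_translate_iff.mpr (by rw [mul_one]; exact pow_mem_branchL k)
  · exact Set.Infinite.image ((mul_right_injective _).injOn) isTree_branchL.2.1
  · intro x hx h hp
    rw [mem_translate_iff] at hx ⊢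
    exact translate_pref k x h _ (isPref_toWord hp) hx

lemma ball_translate_full {G S : X 2} (hG : G.1 = Set.univ) {g : FreeGroup (Fin 2)}
    (hg : g ∈ branchL) (hS : S.1 = translate branchL g) {m : ℕ} (hm : m ≤ wlen g) :
    ball S m = ball G m := by
  ext h
  simp only [ball, Set.mem_setOf_eq, hG, hS, Set.mem_univ, true_and]
  constructor
  · rintro ⟨_, hl⟩; exact hl
  · intro hl
    exact ⟨mem_translate_iff.mpr (mem_branchL_mul hg (le_trans hl hm)), hl⟩

lemma dist_le_of_ball_eq {n : ℕ} {x y : X n} {m : ℕ} (h : ball x m = ball y m) :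
    dist x y ≤ Real.exp (-(m : ℝ)) := by
  rcases eq_or_ne x y with rfl | hne
  · rw [dist_self]
    exact (Real.exp_pos _).le
  · rw [dist_eq_tdist, tdist_eq_of_ne hne]
    apply Real.exp_le_exp.mpr
    apply neg_le_neg
    exact_mod_cast le_csSup (bddAbove_agreeSet hne) h

lemma ball_eq_of_dist_lt {n : ℕ} {x y : X n} {m : ℕ}
    (h : dist x y < Real.exp (-(m : ℝ))) : ball x m = ball y m := by
  rcases eq_or_ne x y with rfl | hne
  · rfl
  · rw [dist_eq_tdist, tdist_eq_of_ne hne, Real.exp_lt_exp, neg_lt_neg_iff] at h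
    have hlt : m < sSup (agreeSet x y) := by exact_mod_cast h
    exact ball_mono_eq hlt.le
      (Nat.sSup_mem ⟨0, zero_mem_agreeSet x y⟩ (bddAbove_agreeSet hne))

lemma of_one_not_mem : (of 1 : FreeGroup (Fin 2)) ∉ branchL := by
  rw [mem_branchL_iff, toWord_of]
  rintro (h | h)
  · exact List.cons_ne_nil _ _ h
  · simp only [List.head?_cons, Option.some.injEq, Prod.mk.injEq] at h
    exact absurd h.1 (by decide)

lemma wlen_pow (k : ℕ) : wlen ((of 0 : FreeGroup (Fin 2)) ^ k) = k := by
  unfold wlen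
  rw [toWord_of_pow, List.length_replicate]

/-- The closure of the orbit of the branch `L` consists of the orbit of `L` together with
the full Cayley tree, which is a fixed point of the action not in the orbit of `L`; hence
the closure consists of exactly two orbits. -/
theorem closure_orbit_branch :
    IsTree branchL ∧ IsTree (Set.univ : Set (FreeGroup (Fin 2))) ∧
    ∀ L G : X 2, L.1 = branchL → G.1 = Set.univ →
      closure (orbit L) = orbit L ∪ {G} ∧
      G ∉ orbit L ∧
      ∀ g : FreeGroup (Fin 2), translate G.1 g = G.1 := by
  refine ⟨isTree_branchL, isTree_univ, ?_⟩
  intro L G hL hG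
  have hfix : ∀ g : FreeGroup (Fin 2), translate G.1 g = G.1 := by
    intro g
    rw [hG]
    ext x
    simp [mem_translate_iff]
  have hGorb : G ∉ orbit L := by
    rintro ⟨g, hgmem, hGt⟩
    have hx : (g⁻¹ * of 1) ∈ translate L.1 g := by
      rw [← hGt, hG]
      trivial
    have : g * (g⁻¹ * of 1) ∈ L.1 := mem_translate_iff.mp hx
    rw [mul_inv_cancel_left, hL] at this
    exact of_one_not_mem this
  refine ⟨?_, hGorb, hfix⟩
  apply Set.Subset.antisymm
  · intro T hT
    by_cases hTG : T = G
    · exact Set.mem_union_right _ (by rw [hTG]; rfl)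
    · left
      obtain ⟨m0, hm0⟩ : ∃ m0, ball T m0 ≠ ball G m0 := by
        by_contra hc
        push_neg at hc
        exact hTG (eq_of_agree_all hc)
      have hsel : ∀ m : ℕ, ∃ S : X 2, S ∈ orbit L ∧ ball T m = ball S m := by
        intro m
        obtain ⟨S, hS, hd⟩ := Metric.mem_closure_iff.mp hT (Real.exp (-(m : ℝ)))
          (Real.exp_pos _)
        exact ⟨S, hS, ball_eq_of_dist_lt hd⟩
      choose S hSorb hSball using hsel
      have hgw : ∀ m, ∃ g, g ∈ branchL ∧ (S m).1 = translate branchL g := by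
        intro m
        obtain ⟨g, hg1, hg2⟩ := hSorb m
        rw [hL] at hg1 hg2
        exact ⟨g, hg1, hg2⟩
      choose g hgmem hgtr using hgw
      have hsmall : ∀ m, m0 ≤ m → wlen (g m) < m0 := by
        intro m hm
        by_contra hbig
        push_neg at hbig
        apply hm0
        have h1 : ball T m0 = ball (S m) m0 := ball_mono_eq hm (hSball m)
        rw [h1, ball_translate_full hG (hgmem m) (hgtr m) hbig]
      have hfin : {x : FreeGroup (Fin 2) | wlen x < m0}.Finite := by
        have hfl : {l : List (Fin 2 × Bool) | l.length ≤ m0}.Finite :=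
          List.finite_length_le _ m0
        apply Set.Finite.of_finite_image (f := FreeGroup.toWord)
        · apply hfl.subset
          rintro _ ⟨x, hx, rfl⟩
          show (FreeGroup.toWord x).length ≤ m0
          exact Nat.le_of_lt hx
        · exact FreeGroup.toWord_injective.injOn
      obtain ⟨g₀, hg₀⟩ : ∃ g₀, {m | m0 ≤ m ∧ g m = g₀}.Infinite := by
        by_contra hc
        push_neg at hc
        have hsub : {m | m0 ≤ m} ⊆ ⋃ x ∈ {x : FreeGroup (Fin 2) | wlen x < m0},
            {m | m0 ≤ m ∧ g m = x} := by
          intro m hm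
          exact Set.mem_biUnion (hsmall m hm) ⟨hm, rfl⟩
        have : ({m | m0 ≤ m} : Set ℕ).Finite :=
          (Set.Finite.biUnion hfin (fun x _ => hc x)).subset hsub
        exact (Set.Ici_infinite m0) (by simpa [Set.Ici] using this)
      obtain ⟨m₁, hm₁⟩ := hg₀.nonempty
      have hTS : T = S m₁ := by
        apply eq_of_agree_all
        intro kk
        obtain ⟨m, hmset, hmk⟩ : ∃ m ∈ {m | m0 ≤ m ∧ g m = g₀}, kk < m := by
          by_contra hc
          push_neg at hc
          exact hg₀ ((Set.finite_Iic kk).subset (fun m hm => hc m hm))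
        have e1 : ball T kk = ball (S m) kk := ball_mono_eq hmk.le (hSball m)
        have e2 : S m = S m₁ := Subtype.ext (by rw [hgtr m, hgtr m₁, hmset.2, hm₁.2])
        rw [e1, e2]
      rw [hTS]
      exact hSorb m₁
  · rintro T (hT | hT)
    · exact subset_closure hT
    · rw [Set.mem_singleton_iff] at hT
      subst hT
      rw [Metric.mem_closure_iff]
      intro ε hε
      obtain ⟨k, hk⟩ := exists_nat_gt (-Real.log ε)
      have hexp : Real.exp (-(k : ℝ)) < ε := by
        rw [← Real.exp_log hε]
        apply Real.exp_lt_exp.mpr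
        linarith
      refine ⟨⟨translate branchL ((of 0 : FreeGroup (Fin 2)) ^ k), isTree_translate_pow k⟩,
        ⟨(of 0 : FreeGroup (Fin 2)) ^ k, by rw [hL]; exact pow_mem_branchL k, by rw [hL]⟩, ?_⟩
      calc dist T ⟨translate branchL ((of 0 : FreeGroup (Fin 2)) ^ k), isTree_translate_pow k⟩
          ≤ Real.exp (-(k : ℝ)) := dist_le_of_ball_eq
            (ball_translate_full hG (pow_mem_branchL k) rfl (le_of_eq (wlen_pow k).symm)).symm
        _ < ε := hexp


end GraphTrees
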